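/- arXiv:2412.11928 — 4 statements merged into one kernel-verified Lean document; each statement's English description precedes it below -/
import Mathlib

section
/- Let m, the curve data (γ, ν, κ) and the tubular data (I, Φ, Ω) with Assumption 2 be as in the context, let ε > 0, and for x = (x₁,x₂) ∈ ℂ² write x⊙σ := x₁σ₁ + x₂σ₂. For a C^∞ function u : ℝ² → ℂ² with compact support contained in Ω, define w(s,y) := √(1 − y κ(s)) · u(Φ(s,y)) for (s,y) ∈ ℝ × I. Then for every (s,y) ∈ ℝ × I: √(1 − y κ(s)) · (H_ε u)(Φ(s,y)) = m(Φ(s,y)) σ₃ w(s,y) − (iε/(1 − y κ(s))) (γ'(s)⊙σ) ∂_s w(s,y) − iε (ν(s)⊙σ) ∂_y w(s,y) − (iε y κ'(s)/(2(1 − y κ(s))²)) (γ'(s)⊙σ) w(s,y) − (iε κ(s)/(2(1 − y κ(s)))) (ν(s)⊙σ) w(s,y). -/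
open MeasureTheory Complex

noncomputable section

abbrev C2 := Fin 2 → ℂ

def pauli1 : Matrix (Fin 2) (Fin 2) ℂ := !![0, 1; 1, 0]
def pauli2 : Matrix (Fin 2) (Fin 2) ℂ := !![0, -Complex.I; Complex.I, 0]
def pauli3 : Matrix (Fin 2) (Fin 2) ℂ := !![1, 0; 0, -1]

def enorm2 (v : ℝ × ℝ) : ℝ := Real.sqrt (v.1 ^ 2 + v.2 ^ 2)
def perp2 (v : ℝ × ℝ) : ℝ × ℝ := (-v.2, v.1)
def dot2 (v w : ℝ × ℝ) : ℝ := v.1 * w.1 + v.2 * w.2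
def grad2 (m : ℝ × ℝ → ℝ) (x : ℝ × ℝ) : ℝ × ℝ := (fderiv ℝ m x (1, 0), fderiv ℝ m x (0, 1))

def pdx (u : ℝ × ℝ → C2) (x : ℝ × ℝ) : C2 := fderiv ℝ u x (1, 0)
def pdy (u : ℝ × ℝ → C2) (x : ℝ × ℝ) : C2 := fderiv ℝ u x (0, 1)

def diracOp (ε : ℝ) (m : ℝ × ℝ → ℝ) (u : ℝ × ℝ → C2) (x : ℝ × ℝ) : C2 :=
  (m x : ℂ) • pauli3.mulVec (u x)
    - (Complex.I * (ε : ℂ)) • pauli1.mulVec (pdx u x)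
    - (Complex.I * (ε : ℂ)) • pauli2.mulVec (pdy u x)

structure IsClassicalSolution (ε : ℝ) (m : ℝ × ℝ → ℝ) (ψ : ℝ → ℝ × ℝ → C2) : Prop where
  smooth : ContDiff ℝ (⊤ : ℕ∞) (fun p : ℝ × (ℝ × ℝ) => ψ p.1 p.2)
  schwartz : ∀ t : ℝ, ∀ k n : ℕ, ∃ C : ℝ, ∀ x : ℝ × ℝ,
      ‖x‖ ^ k * ‖iteratedFDeriv ℝ n (ψ t) x‖ ≤ C
  l2diff : ∃ F : ℝ → Lp C2 2 (volume : Measure (ℝ × ℝ)),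
      Differentiable ℝ F ∧ ∀ t : ℝ, (F t : ℝ × ℝ → C2) =ᵐ[volume] ψ t
  eqn : ∀ t x, (Complex.I * (ε : ℂ)) • deriv (fun τ => ψ τ x) t = diracOp ε m (ψ t) x

def nuVec (m : ℝ × ℝ → ℝ) (γ : ℝ → ℝ × ℝ) (s : ℝ) : ℝ × ℝ :=
  (enorm2 (grad2 m (γ s)))⁻¹ • grad2 m (γ s)

def curv (m : ℝ × ℝ → ℝ) (γ : ℝ → ℝ × ℝ) (s : ℝ) : ℝ :=
  dot2 (deriv (deriv γ) s) (nuVec m γ s)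

def thetaFun (m : ℝ × ℝ → ℝ) (γ : ℝ → ℝ × ℝ) (θ₀ : ℝ) (s : ℝ) : ℝ :=
  θ₀ + ∫ η in (0:ℝ)..s, curv m γ η

def tubeMap (m : ℝ × ℝ → ℝ) (γ : ℝ → ℝ × ℝ) (p : ℝ × ℝ) : ℝ × ℝ :=
  γ p.1 + p.2 • nuVec m γ p.1

structure CurveData (m : ℝ × ℝ → ℝ) (γ : ℝ → ℝ × ℝ) : Prop where
  smooth : ContDiff ℝ (⊤ : ℕ∞) γ
  grad_ne : ∀ s, grad2 m (γ s) ≠ 0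
  ode : ∀ s, deriv γ s = (enorm2 (grad2 m (γ s)))⁻¹ • (-(perp2 (grad2 m (γ s))))
  start : m (γ 0) = 0

structure TubularData (m : ℝ × ℝ → ℝ) (γ : ℝ → ℝ × ℝ) (K : ℝ) : Prop where
  Ksup : K = sSup (Set.range fun s => |curv m γ s|)
  Kpos : 0 < K
  Kbdd : BddAbove (Set.range fun s => |curv m γ s|)
  inj : Set.InjOn (tubeMap m γ) (Set.univ ×ˢ Set.Ioo (-(1/(2*K))) (1/(2*K)))
  inv : ∃ Ψ : ℝ × ℝ → ℝ × ℝ,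
      ContDiffOn ℝ (⊤ : ℕ∞) Ψ (tubeMap m γ '' (Set.univ ×ˢ Set.Ioo (-(1/(2*K))) (1/(2*K)))) ∧
      ∀ p ∈ Set.univ ×ˢ Set.Ioo (-(1/(2*K))) (1/(2*K)), Ψ (tubeMap m γ p) = p

def uMat (θv : ℝ) : Matrix (Fin 2) (Fin 2) ℂ :=
  !![Complex.exp (Complex.I * ((Real.pi/4 + θv/2 : ℝ) : ℂ)),
     -Complex.exp (-(Complex.I * ((Real.pi/4 + θv/2 : ℝ) : ℂ)));
     Complex.exp (Complex.I * ((Real.pi/4 + θv/2 : ℝ) : ℂ)),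
     Complex.exp (-(Complex.I * ((Real.pi/4 + θv/2 : ℝ) : ℂ)))]

def uOp (m : ℝ × ℝ → ℝ) (γ : ℝ → ℝ × ℝ) (θ₀ : ℝ) (u : ℝ × ℝ → C2) (p : ℝ × ℝ) : C2 :=
  ((Real.sqrt ((1 - p.2 * curv m γ p.1)/2) : ℝ) : ℂ) •
    (uMat (thetaFun m γ θ₀ p.1)).mulVec (u (tubeMap m γ p))

def transOp (ε : ℝ) (m : ℝ × ℝ → ℝ) (γ : ℝ → ℝ × ℝ) (v : ℝ × ℝ → C2) (p : ℝ × ℝ) : C2 :=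
  (m (tubeMap m γ p) : ℂ) • pauli1.mulVec (v p)
  + (Complex.I * (ε : ℂ)) • pauli2.mulVec (pdy v p)
  - (Complex.I * (ε : ℂ) / ((1 - p.2 * curv m γ p.1 : ℝ) : ℂ)) • pauli3.mulVec (pdx v p)
  - (Complex.I * (ε : ℂ) * (p.2 : ℂ) * ((deriv (curv m γ) p.1 : ℝ) : ℂ)
      / ((2 * (1 - p.2 * curv m γ p.1)^2 : ℝ) : ℂ)) • pauli3.mulVec (v p)

def odot (v : ℝ × ℝ) : Matrix (Fin 2) (Fin 2) ℂ := (v.1 : ℂ) • pauli1 + (v.2 : ℂ) • pauli2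

variable {m : ℝ × ℝ → ℝ} {γ : ℝ → ℝ × ℝ}
lemma nuVec_eq (h : CurveData m γ) (s : ℝ) : nuVec m γ s = perp2 (deriv γ s) := by
  rw [h.ode s]
  simp [nuVec, perp2, Prod.ext_iff, smul_eq_mul, mul_comm]

lemma grad_sq_pos (h : CurveData m γ) (s : ℝ) :
    0 < (grad2 m (γ s)).1 ^ 2 + (grad2 m (γ s)).2 ^ 2 := by
  have hv := h.grad_ne s
  have : (grad2 m (γ s)).1 ≠ 0 ∨ (grad2 m (γ s)).2 ≠ 0 := by
    by_contra hc; push_neg at hc; exact hv (Prod.ext hc.1 hc.2)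
  rcases this with h1 | h1 <;> positivity

lemma unit_speed (h : CurveData m γ) (s : ℝ) :
    (deriv γ s).1 ^ 2 + (deriv γ s).2 ^ 2 = 1 := by
  have hS := grad_sq_pos h s
  have hsq := Real.sq_sqrt hS.le
  have h0 := (Real.sqrt_pos.mpr hS).ne'
  rw [h.ode s]
  simp only [enorm2, perp2, Prod.smul_fst, Prod.smul_snd, Prod.fst_neg, Prod.snd_neg,
    smul_eq_mul]
  field_simp
  linarith [hsq]

lemma deriv_gamma_smooth (h : CurveData m γ) : ContDiff ℝ (⊤ : ℕ∞) (deriv γ) :=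
  (contDiff_infty_iff_deriv.mp h.smooth).2

lemma hasDerivAt_gamma (h : CurveData m γ) (s : ℝ) : HasDerivAt γ (deriv γ s) s :=
  (h.smooth.differentiable (by simp) s).hasDerivAt

lemma hasDerivAt_dgamma (h : CurveData m γ) (s : ℝ) :
    HasDerivAt (deriv γ) (deriv (deriv γ) s) s :=
  ((deriv_gamma_smooth h).differentiable (by simp) s).hasDerivAt

lemma hasDerivAt_c (h : CurveData m γ) (s : ℝ) :
    HasDerivAt (fun t => (deriv γ t).1) (deriv (deriv γ) s).1 s :=
  (hasFDerivAt_fst.comp_hasDerivAt s (hasDerivAt_dgamma h s) : )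

lemma hasDerivAt_d (h : CurveData m γ) (s : ℝ) :
    HasDerivAt (fun t => (deriv γ t).2) (deriv (deriv γ) s).2 s :=
  (hasFDerivAt_snd.comp_hasDerivAt s (hasDerivAt_dgamma h s) : )

lemma orth (h : CurveData m γ) (s : ℝ) :
    (deriv (deriv γ) s).1 * (deriv γ s).1 + (deriv (deriv γ) s).2 * (deriv γ s).2 = 0 := by
  have hF : HasDerivAt (fun t => (deriv γ t).1 ^ 2 + (deriv γ t).2 ^ 2)
      (2 * (deriv γ s).1 * (deriv (deriv γ) s).1 + 2 * (deriv γ s).2 * (deriv (deriv γ) s).2) s := by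
    have h1 := ((hasDerivAt_c h s).fun_pow 2).fun_add ((hasDerivAt_d h s).fun_pow 2)
    refine h1.congr_deriv ?_
    ring
  have hconst : (fun t => (deriv γ t).1 ^ 2 + (deriv γ t).2 ^ 2) = fun _ => (1:ℝ) := by
    funext t; exact unit_speed h t
  rw [hconst] at hF
  have := hF.unique (hasDerivAt_const s 1)
  linarith

lemma ddgamma_eq (h : CurveData m γ) (s : ℝ) :
    deriv (deriv γ) s = curv m γ s • nuVec m γ s := by
  have ho := orth h s
  have hu := unit_speed h s
  rw [nuVec_eq h s]
  have hc : curv m γ s = (deriv (deriv γ) s).1 * (-(deriv γ s).2)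
      + (deriv (deriv γ) s).2 * (deriv γ s).1 := by
    rw [curv, nuVec_eq h s]; rfl
  ext
  · show (deriv (deriv γ) s).1 = curv m γ s * (-(deriv γ s).2)
    rw [hc]; linear_combination (deriv γ s).1 * ho - (deriv (deriv γ) s).1 * hu
  · show (deriv (deriv γ) s).2 = curv m γ s * (deriv γ s).1
    rw [hc]; linear_combination (deriv γ s).2 * ho - (deriv (deriv γ) s).2 * hu

lemma hasDerivAt_nuVec (h : CurveData m γ) (s : ℝ) :
    HasDerivAt (nuVec m γ) (-(curv m γ s) • deriv γ s) s := by
  have hfun : nuVec m γ = fun t => ((-(deriv γ t).2, (deriv γ t).1) : ℝ × ℝ) := by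
    funext t; rw [nuVec_eq h t]; rfl
  rw [hfun]
  have h1 := ((hasDerivAt_d h s).neg).prodMk (hasDerivAt_c h s)
  convert h1 using 1
  · rfl
  have := ddgamma_eq h s
  rw [nuVec_eq h s] at this
  rw [Prod.ext_iff] at this ⊢
  simp only [perp2, Prod.smul_fst, Prod.smul_snd, smul_eq_mul, Prod.fst_neg, Prod.snd_neg] at this ⊢
  constructor
  · rw [this.2]; ring
  · rw [this.1]; ring

lemma nuVec_smooth (h : CurveData m γ) : ContDiff ℝ (⊤ : ℕ∞) (nuVec m γ) := by
  have hfun : nuVec m γ = fun t => ((-(deriv γ t).2, (deriv γ t).1) : ℝ × ℝ) := by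
    funext t; rw [nuVec_eq h t]; rfl
  rw [hfun]
  exact ((deriv_gamma_smooth h).snd.neg).prodMk (deriv_gamma_smooth h).fst

lemma curv_diffAt (h : CurveData m γ) (s : ℝ) : DifferentiableAt ℝ (curv m γ) s := by
  have h2 : ContDiff ℝ (⊤ : ℕ∞) (deriv (deriv γ)) :=
    (contDiff_infty_iff_deriv.mp (deriv_gamma_smooth h)).2
  have : DifferentiableAt ℝ (fun t => dot2 (deriv (deriv γ) t) (nuVec m γ t)) s := by
    apply DifferentiableAt.add
    · exact ((h2.differentiable (by simp) s).fst.mul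
        (((nuVec_smooth h).differentiable (by simp) s).fst))
    · exact ((h2.differentiable (by simp) s).snd.mul
        (((nuVec_smooth h).differentiable (by simp) s).snd))
  exact this


set_option maxHeartbeats 2000000 in
/-- conjugation of the Dirac operator by the change of variables `V_Φ`
(weighted pull-back to normal geodesic coordinates). -/
theorem stmt2
    (m : ℝ × ℝ → ℝ) (hm : ContDiff ℝ (⊤ : ℕ∞) m)
    (γ : ℝ → ℝ × ℝ) (hcurve : CurveData m γ)
    (K : ℝ) (htube : TubularData m γ K)
    (ε : ℝ) (hε : 0 < ε)
    (u : ℝ × ℝ → C2) (hu : ContDiff ℝ (⊤ : ℕ∞) u) (husupp : HasCompactSupport u)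
    (hΩ : tsupport u ⊆ tubeMap m γ '' (Set.univ ×ˢ Set.Ioo (-(1/(2*K))) (1/(2*K))))
    (w : ℝ × ℝ → C2)
    (hw : ∀ p : ℝ × ℝ, w p = ((Real.sqrt (1 - p.2 * curv m γ p.1) : ℝ) : ℂ) • u (tubeMap m γ p))
    (s y : ℝ) (hy : y ∈ Set.Ioo (-(1/(2*K))) (1/(2*K))) :
    ((Real.sqrt (1 - y * curv m γ s) : ℝ) : ℂ) • diracOp ε m u (tubeMap m γ (s, y))
      = (m (tubeMap m γ (s, y)) : ℂ) • pauli3.mulVec (w (s, y))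
        - (Complex.I * (ε : ℂ) / ((1 - y * curv m γ s : ℝ) : ℂ)) •
            (odot (deriv γ s)).mulVec (pdx w (s, y))
        - (Complex.I * (ε : ℂ)) • (odot (nuVec m γ s)).mulVec (pdy w (s, y))
        - (Complex.I * (ε : ℂ) * (y : ℂ) * ((deriv (curv m γ) s : ℝ) : ℂ)
            / ((2 * (1 - y * curv m γ s)^2 : ℝ) : ℂ)) • (odot (deriv γ s)).mulVec (w (s, y))
        - (Complex.I * (ε : ℂ) * ((curv m γ s : ℝ) : ℂ)
            / ((2 * (1 - y * curv m γ s) : ℝ) : ℂ)) • (odot (nuVec m γ s)).mulVec (w (s, y)) := by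
  classical
  have hκK : |curv m γ s| ≤ K := by
    rw [htube.Ksup]; exact le_csSup htube.Kbdd ⟨s, rfl⟩
  have hyK : |y| ≤ 1 / (2 * K) := le_of_lt (abs_lt.mpr ⟨hy.1, hy.2⟩)
  have hKpos := htube.Kpos
  set κv := curv m γ s with hκv
  set κ' := deriv (curv m γ) s with hκ'
  set q : ℝ := 1 - y * κv with hqdef
  have hq : (1:ℝ)/2 ≤ q := by
    have h3 : |y * κv| ≤ 1/2 := by
      rw [abs_mul]
      calc |y| * |κv| ≤ (1/(2*K)) * K :=
            mul_le_mul hyK hκK (abs_nonneg _) (by positivity)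
        _ = 1/2 := by field_simp
    have := (abs_le.mp h3).2
    simp only [hqdef]; linarith
  have hq0 : (0:ℝ) < q := by linarith
  set sq : ℝ := Real.sqrt q with hsqdef
  have hs0 : 0 < sq := Real.sqrt_pos.mpr hq0
  have hsq : sq ^ 2 = q := Real.sq_sqrt hq0.le
  set c : ℝ := (deriv γ s).1 with hc
  set d : ℝ := (deriv γ s).2 with hd
  have hcd : c ^ 2 + d ^ 2 = 1 := unit_speed hcurve s
  set X := tubeMap m γ (s, y) with hX
  -- derivative of Φ
  have hG := (hasDerivAt_gamma hcurve s).hasFDerivAt.comp (s, y)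
      (hasFDerivAt_fst (𝕜 := ℝ) (p := ((s, y) : ℝ × ℝ)))
  have hN := (hasDerivAt_nuVec hcurve s).hasFDerivAt.comp (s, y)
      (hasFDerivAt_fst (𝕜 := ℝ) (p := ((s, y) : ℝ × ℝ)))
  have hSnd : HasFDerivAt (Prod.snd : ℝ × ℝ → ℝ) (ContinuousLinearMap.snd ℝ ℝ ℝ) (s, y) :=
    hasFDerivAt_snd
  have hPhi : HasFDerivAt (tubeMap m γ)
      ((((1 : ℝ →L[ℝ] ℝ).smulRight (deriv γ s)).comp (ContinuousLinearMap.fst ℝ ℝ ℝ)) +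
        ((Prod.snd (s, y)) • (((1 : ℝ →L[ℝ] ℝ).smulRight (-(curv m γ s) • deriv γ s)).comp
            (ContinuousLinearMap.fst ℝ ℝ ℝ)) +
          (ContinuousLinearMap.snd ℝ ℝ ℝ).smulRight (nuVec m γ ((s, y) : ℝ × ℝ).1))) (s, y) :=
    hG.add (hSnd.smul hN)
  set LΦ := (((1 : ℝ →L[ℝ] ℝ).smulRight (deriv γ s)).comp (ContinuousLinearMap.fst ℝ ℝ ℝ)) +
        ((Prod.snd (s, y)) • (((1 : ℝ →L[ℝ] ℝ).smulRight (-(curv m γ s) • deriv γ s)).comp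
            (ContinuousLinearMap.fst ℝ ℝ ℝ)) +
          (ContinuousLinearMap.snd ℝ ℝ ℝ).smulRight (nuVec m γ ((s, y) : ℝ × ℝ).1)) with hLΦ
  have hL1 : LΦ (1, 0) = q • deriv γ s := by
    simp [hLΦ, hqdef, hκv, sub_smul, smul_smul, one_smul]
    module
  have hL2 : LΦ (0, 1) = nuVec m γ s := by
    simp [hLΦ]
  have hdir : ∀ v : ℝ × ℝ, fderiv ℝ u X v = v.1 • pdx u X + v.2 • pdy u X := by
    intro v
    have hv : v = v.1 • ((1:ℝ), (0:ℝ)) + v.2 • ((0:ℝ), (1:ℝ)) := by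
      ext <;> simp
    conv_lhs => rw [hv]
    rw [map_add, (fderiv ℝ u X).map_smul, (fderiv ℝ u X).map_smul]
    rfl
  have hDu := (hu.differentiable (by simp) X).hasFDerivAt
  have hUΦ : HasFDerivAt (fun p : ℝ × ℝ => u (tubeMap m γ p)) ((fderiv ℝ u X).comp LΦ) (s, y) :=
    hDu.comp (s, y) hPhi
  have hkD : HasDerivAt (curv m γ) κ' s := (curv_diffAt hcurve s).hasDerivAt
  have hkf := hkD.hasFDerivAt.comp (s, y) (hasFDerivAt_fst (𝕜 := ℝ) (p := ((s, y) : ℝ × ℝ)))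
  have hr := (hasFDerivAt_const (1 : ℝ) ((s, y) : ℝ × ℝ)).sub (hSnd.mul hkf)
  have hsqrt := HasDerivAt.comp_hasFDerivAt (s, y) (Real.hasDerivAt_sqrt hq0.ne') hr
  have hg := Complex.ofRealCLM.hasFDerivAt.comp (s, y) hsqrt
  have hwfun : w = fun p : ℝ × ℝ =>
      ((Real.sqrt (1 - p.2 * curv m γ p.1) : ℝ) : ℂ) • u (tubeMap m γ p) := funext hw
  set Lr : ℝ × ℝ →L[ℝ] ℝ := (0 : ℝ × ℝ →L[ℝ] ℝ) -
      (y • (((1 : ℝ →L[ℝ] ℝ).smulRight κ').comp (ContinuousLinearMap.fst ℝ ℝ ℝ)) +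
        κv • ContinuousLinearMap.snd ℝ ℝ ℝ) with hLrdef
  have hW' : HasFDerivAt w
      (((sq : ℝ) : ℂ) • ((fderiv ℝ u X).comp LΦ) +
        (Complex.ofRealCLM.comp ((1 / (2 * sq)) • Lr)).smulRight (u X)) (s, y) := by
    rw [hwfun]; exact hg.smul hUΦ
  have hLr1 : Lr (1, 0) = -(y * κ') := by
    simp [hLrdef]
  have hLr2 : Lr (0, 1) = -κv := by
    simp [hLrdef]
  have hnu : nuVec m γ s = (-d, c) := by
    rw [nuVec_eq hcurve s]; rfl
  have hwx : pdx w (s, y) = (((q * c) * sq : ℝ) : ℂ) • pdx u X +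
      (((q * d) * sq : ℝ) : ℂ) • pdy u X + ((-(y * κ') / (2 * sq) : ℝ) : ℂ) • u X := by
    rw [pdx, hW'.fderiv]
    simp only [ContinuousLinearMap.add_apply, ContinuousLinearMap.coe_smul', Pi.smul_apply,
      ContinuousLinearMap.coe_comp', Function.comp_apply, ContinuousLinearMap.smulRight_apply,
      ContinuousLinearMap.coe_smul, hL1, hLr1, Complex.ofRealCLM_apply]
    rw [hdir]
    funext i
    simp [Prod.smul_fst, Prod.smul_snd, smul_eq_mul, Complex.real_smul]
    push_cast
    ring
  have hwy : pdy w (s, y) = ((-d * sq : ℝ) : ℂ) • pdx u X +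
      ((c * sq : ℝ) : ℂ) • pdy u X + ((-κv / (2 * sq) : ℝ) : ℂ) • u X := by
    rw [pdy, hW'.fderiv]
    simp only [ContinuousLinearMap.add_apply, ContinuousLinearMap.coe_smul', Pi.smul_apply,
      ContinuousLinearMap.coe_comp', Function.comp_apply, ContinuousLinearMap.smulRight_apply,
      ContinuousLinearMap.coe_smul, hL2, hLr2, Complex.ofRealCLM_apply]
    rw [hnu, hdir]
    funext i
    simp [Prod.smul_fst, Prod.smul_snd, smul_eq_mul, Complex.real_smul]
    push_cast
    ring
  have hwsy : w (s, y) = ((sq : ℝ) : ℂ) • u X := hw (s, y)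
  rw [hwsy, hwx, hwy, hnu]
  have hsqC : ((sq : ℂ)) ^ 2 = (q : ℂ) := by
    rw [← Complex.ofReal_pow, hsq]
  have hsne : (sq : ℂ) ≠ 0 := by
    simpa using hs0.ne'
  have hqne : (q : ℂ) ≠ 0 := by
    simpa using hq0.ne'
  have hcdC : ((c : ℂ)) ^ 2 + ((d : ℂ)) ^ 2 = 1 := by
    exact_mod_cast hcd
  have hgam : deriv γ s = (c, d) := by rw [hc, hd]
  rw [hgam]
  clear hW' hPhi hG hN hSnd hUΦ hDu hkf hr hsqrt hg hdir hwfun hLr1 hLr2 hL1 hL2 hw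
  clear hLrdef hLΦ
  clear Lr LΦ
  clear hwx hwy hwsy hnu hκK hyK hy hΩ husupp hu hε htube hcurve hm
  clear hqdef hsqdef hκv hκ' hc hd hX hq hq0 hs0 hsq hcd hKpos
  clear_value q sq κv κ' c d X
  have h9 : ((sq : ℂ)) ^ 9 * ((sq : ℂ))⁻¹ ^ 8 = (sq : ℂ) := by field_simp
  have h11 : ((sq : ℂ)) ^ 11 * ((sq : ℂ))⁻¹ ^ 8 = ((sq : ℂ)) ^ 3 := by field_simp
  funext i
  fin_cases i
  · simp only [diracOp, odot, pauli1, pauli2, pauli3, Matrix.mulVec, dotProduct,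
      Fin.sum_univ_two, Matrix.cons_val_zero, Matrix.cons_val_one, Matrix.head_cons,
      Pi.smul_apply, Pi.sub_apply, Pi.add_apply, smul_eq_mul,
      Complex.real_smul, Matrix.smul_apply, Matrix.add_apply, Matrix.cons_val', Matrix.empty_val',
      Matrix.cons_val_fin_one, Fin.isValue, Matrix.of_apply, Matrix.cons_val_zero,
      Matrix.cons_val_one, Matrix.head_cons, Matrix.head_fin_const]
    push_cast
    rw [← hsqC]
    field_simp [hsne]
    ring_nf
    linear_combination (2*Complex.I*(ε:ℂ)*pdx u X 1*((sq:ℂ))^4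
      - 2*Complex.I^2*(ε:ℂ)*pdy u X 1*((sq:ℂ))^4) * hcdC
  · simp only [diracOp, odot, pauli1, pauli2, pauli3, Matrix.mulVec, dotProduct,
      Fin.sum_univ_two, Matrix.cons_val_zero, Matrix.cons_val_one, Matrix.head_cons,
      Pi.smul_apply, Pi.sub_apply, Pi.add_apply, smul_eq_mul,
      Complex.real_smul, Matrix.smul_apply, Matrix.add_apply, Matrix.cons_val', Matrix.empty_val',
      Matrix.cons_val_fin_one, Fin.isValue, Matrix.of_apply, Matrix.cons_val_zero,
      Matrix.cons_val_one, Matrix.head_cons, Matrix.head_fin_const]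
    push_cast
    rw [← hsqC]
    field_simp [hsne]
    ring_nf
    linear_combination (2*Complex.I*(ε:ℂ)*pdx u X 0*((sq:ℂ))^4
      + 2*Complex.I^2*(ε:ℂ)*pdy u X 0*((sq:ℂ))^4) * hcdC
end
end

section
/- Let H be a complex Hilbert space, d ≥ 1, A an index set, and for each n ∈ A let Π_n : ℝ^d_x × ℝ^d_ξ → B(H) be a continuously differentiable map into the bounded operators on H such that Π_n(z) Π_k(z) = δ_{nk} Π_n(z) for all z ∈ ℝ^{2d} and all n,k ∈ A (a family of pairwise orthogonal projections). Then for all j, k, ℓ ∈ A and all z ∈ ℝ^{2d}: Π_k(z) ( {Π_j, Π_ℓ}(z) − {Π_ℓ, Π_j}(z) ) Π_k(z) = 0. -/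
noncomputable section

/-- Non-commutative Poisson bracket `{f,g} = Σᵢ ∂_{ξᵢ}f ∘ ∂_{xᵢ}g − ∂_{xᵢ}f ∘ ∂_{ξᵢ}g`
for operator-valued symbols on `ℝ^d_x × ℝ^d_ξ`. -/
def pBrack {H : Type*} [NormedAddCommGroup H] [InnerProductSpace ℂ H] (d : ℕ)
    (f g : ((Fin d → ℝ) × (Fin d → ℝ)) → (H →L[ℂ] H))
    (z : (Fin d → ℝ) × (Fin d → ℝ)) : H →L[ℂ] H :=
  ∑ i : Fin d,
    (fderiv ℝ f z (0, Pi.single i 1) * fderiv ℝ g z (Pi.single i 1, 0)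
      - fderiv ℝ f z (Pi.single i 1, 0) * fderiv ℝ g z (0, Pi.single i 1))

section AlgLemmas
variable {R : Type*} [Ring R]

/-- Pure ring algebra for the case `k = j` (with `j ≠ ℓ`).
`p` = Πⱼ, `q` = Πℓ, `a` = ∂ᵤΠⱼ, `b` = ∂ᵤΠℓ, `c` = ∂ᵥΠⱼ, `d` = ∂ᵥΠℓ. -/
lemma stmt10_alg_kj (p q a b c d : R)
    (hpq : p * q = 0) (hqp : q * p = 0)
    (hpa : p * a = a - a * p) (hap : a * p = a - p * a)
    (hpc : p * c = c - c * p) (hcp : c * p = c - p * c)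
    (hpb : p * b = -(a * q)) (hbp : b * p = -(q * a))
    (hpd : p * d = -(c * q)) (hdp : d * p = -(q * c)) :
    p * (a * d + d * a - c * b - b * c) * p = 0 := by
  have t1 : p * (a * d) * p = -(a * (q * c)) := by
    calc p * (a * d) * p = (p * a) * (d * p) := by noncomm_ring
      _ = (a - a * p) * (-(q * c)) := by rw [hpa, hdp]
      _ = -(a * (q * c)) + a * (p * q) * c := by noncomm_ring
      _ = -(a * (q * c)) := by rw [hpq]; noncomm_ring
  have t2 : p * (d * a) * p = c * (b * p) := by
    calc p * (d * a) * p = (p * d) * (a * p) := by noncomm_ring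
      _ = (-(c * q)) * (a - p * a) := by rw [hpd, hap]
      _ = -(c * (q * a)) + c * (q * p) * a := by noncomm_ring
      _ = -(c * (q * a)) := by rw [hqp]; noncomm_ring
      _ = c * (b * p) := by rw [hbp]; noncomm_ring
  have t3 : p * (c * b) * p = c * (b * p) := by
    calc p * (c * b) * p = (p * c) * (b * p) := by noncomm_ring
      _ = (c - c * p) * (-(q * a)) := by rw [hpc, hbp]
      _ = -(c * (q * a)) + c * (p * q) * a := by noncomm_ring
      _ = -(c * (q * a)) := by rw [hpq]; noncomm_ring
      _ = c * (b * p) := by rw [hbp]; noncomm_ring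
  have t4 : p * (b * c) * p = -(a * (q * c)) := by
    calc p * (b * c) * p = (p * b) * (c * p) := by noncomm_ring
      _ = (-(a * q)) * (c - p * c) := by rw [hpb, hcp]
      _ = -(a * (q * c)) + a * (q * p) * c := by noncomm_ring
      _ = -(a * (q * c)) := by rw [hqp]; noncomm_ring
  have expand : p * (a * d + d * a - c * b - b * c) * p
      = p * (a * d) * p + p * (d * a) * p - p * (c * b) * p - p * (b * c) * p := by
    noncomm_ring
  rw [expand, t1, t2, t3, t4]
  noncomm_ring

/-- Pure ring algebra for the case `k ∉ {j, ℓ}` (with `j ≠ ℓ`).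
`r` = Πₖ, `p` = Πⱼ, `q` = Πℓ, `a,b,c,d` as before, `e` = ∂ᵤΠₖ, `f` = ∂ᵥΠₖ. -/
lemma stmt10_alg_ne (r p q a b c d e f : R)
    (hpq : p * q = 0) (hqp : q * p = 0)
    (hra : r * a = -(e * p)) (har : a * r = -(p * e))
    (hrb : r * b = -(e * q)) (hbr : b * r = -(q * e))
    (hrc : r * c = -(f * p)) (hcr : c * r = -(p * f))
    (hrd : r * d = -(f * q)) (hdr : d * r = -(q * f)) :
    r * (a * d + d * a - c * b - b * c) * r = 0 := by
  have t1 : r * (a * d) * r = 0 := by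
    calc r * (a * d) * r = (r * a) * (d * r) := by noncomm_ring
      _ = (-(e * p)) * (-(q * f)) := by rw [hra, hdr]
      _ = e * (p * q) * f := by noncomm_ring
      _ = 0 := by rw [hpq]; noncomm_ring
  have t2 : r * (d * a) * r = 0 := by
    calc r * (d * a) * r = (r * d) * (a * r) := by noncomm_ring
      _ = (-(f * q)) * (-(p * e)) := by rw [hrd, har]
      _ = f * (q * p) * e := by noncomm_ring
      _ = 0 := by rw [hqp]; noncomm_ring
  have t3 : r * (c * b) * r = 0 := by
    calc r * (c * b) * r = (r * c) * (b * r) := by noncomm_ring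
      _ = (-(f * p)) * (-(q * e)) := by rw [hrc, hbr]
      _ = f * (p * q) * e := by noncomm_ring
      _ = 0 := by rw [hpq]; noncomm_ring
  have t4 : r * (b * c) * r = 0 := by
    calc r * (b * c) * r = (r * b) * (c * r) := by noncomm_ring
      _ = (-(e * q)) * (-(p * f)) := by rw [hrb, hcr]
      _ = e * (q * p) * f := by noncomm_ring
      _ = 0 := by rw [hqp]; noncomm_ring
  have expand : r * (a * d + d * a - c * b - b * c) * r
      = r * (a * d) * r + r * (d * a) * r - r * (c * b) * r - r * (b * c) * r := by
    noncomm_ring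
  rw [expand, t1, t2, t3, t4]
  noncomm_ring

end AlgLemmas

section Derivs

variable {H : Type*} [NormedAddCommGroup H] [InnerProductSpace ℂ H] [CompleteSpace H]
  {d : ℕ} {A : Type*} {P : A → ((Fin d → ℝ) × (Fin d → ℝ)) → (H →L[ℂ] H)}

/-- Leibniz relation for equal indices: differentiating `Πₙ² = Πₙ`. -/
lemma stmt10_rel_eq (hC1 : ∀ n, ContDiff ℝ 1 (P n))
    (hidem : ∀ n z, P n z * P n z = P n z)
    (n : A) (z w : (Fin d → ℝ) × (Fin d → ℝ)) :
    fderiv ℝ (P n) z w * P n z + P n z * fderiv ℝ (P n) z w = fderiv ℝ (P n) z w := by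
  have hn : HasFDerivAt (P n) (fderiv ℝ (P n) z) z :=
    ((hC1 n).differentiable one_ne_zero z).hasFDerivAt
  have hmul := hn.mul' hn
  have heq : P n * P n = P n := funext fun y => hidem n y
  rw [heq] at hmul
  have h := hmul.unique hn
  have happ := congrArg (fun L => L w) h
  simp only [ContinuousLinearMap.add_apply, ContinuousLinearMap.smul_apply,
    ContinuousLinearMap.smulRight_apply, smul_eq_mul, op_smul_eq_mul] at happ
  rw [add_comm] at happ
  exact happ

/-- Leibniz relation for distinct indices: differentiating `Πₙ Πₘ = 0`. -/
lemma stmt10_rel_ne (hC1 : ∀ n, ContDiff ℝ 1 (P n))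
    (horth : ∀ n k, n ≠ k → ∀ z, P n z * P k z = 0)
    {n m : A} (hnm : n ≠ m) (z w : (Fin d → ℝ) × (Fin d → ℝ)) :
    fderiv ℝ (P n) z w * P m z + P n z * fderiv ℝ (P m) z w = 0 := by
  have hn : HasFDerivAt (P n) (fderiv ℝ (P n) z) z :=
    ((hC1 n).differentiable one_ne_zero z).hasFDerivAt
  have hm : HasFDerivAt (P m) (fderiv ℝ (P m) z) z :=
    ((hC1 m).differentiable one_ne_zero z).hasFDerivAt
  have hmul := hn.mul' hm
  have heq : P n * P m = fun _ => (0 : H →L[ℂ] H) :=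
    funext fun y => horth n m hnm y
  rw [heq] at hmul
  have h := hmul.unique (hasFDerivAt_const 0 z)
  have happ := congrArg (fun L => L w) h
  simp only [ContinuousLinearMap.add_apply, ContinuousLinearMap.smul_apply,
    ContinuousLinearMap.smulRight_apply, smul_eq_mul, op_smul_eq_mul, ContinuousLinearMap.zero_apply] at happ
  rw [add_comm] at happ
  exact happ

/-- Sandwich identity in the case `k = j ≠ ℓ`. -/
lemma stmt10_sand_kj (hC1 : ∀ n, ContDiff ℝ 1 (P n))
    (hidem : ∀ n z, P n z * P n z = P n z)
    (horth : ∀ n k, n ≠ k → ∀ z, P n z * P k z = 0)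
    {j ℓ : A} (hjl : j ≠ ℓ) (z u v : (Fin d → ℝ) × (Fin d → ℝ)) :
    P j z * (fderiv ℝ (P j) z u * fderiv ℝ (P ℓ) z v
        + fderiv ℝ (P ℓ) z v * fderiv ℝ (P j) z u
        - fderiv ℝ (P j) z v * fderiv ℝ (P ℓ) z u
        - fderiv ℝ (P ℓ) z u * fderiv ℝ (P j) z v) * P j z = 0 := by
  apply stmt10_alg_kj (P j z) (P ℓ z)
  · exact horth j ℓ hjl z
  · exact horth ℓ j hjl.symm z
  · exact eq_sub_of_add_eq' (stmt10_rel_eq hC1 hidem j z u)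
  · exact eq_sub_of_add_eq (stmt10_rel_eq hC1 hidem j z u)
  · exact eq_sub_of_add_eq' (stmt10_rel_eq hC1 hidem j z v)
  · exact eq_sub_of_add_eq (stmt10_rel_eq hC1 hidem j z v)
  · exact eq_neg_of_add_eq_zero_right (stmt10_rel_ne hC1 horth hjl z u)
  · exact eq_neg_of_add_eq_zero_left (stmt10_rel_ne hC1 horth hjl.symm z u)
  · exact eq_neg_of_add_eq_zero_right (stmt10_rel_ne hC1 horth hjl z v)
  · exact eq_neg_of_add_eq_zero_left (stmt10_rel_ne hC1 horth hjl.symm z v)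

/-- Sandwich identity: for all indices `j k ℓ` and directions `u v`,
`Πₖ (∂ᵤΠⱼ ∂ᵥΠℓ + ∂ᵥΠℓ ∂ᵤΠⱼ − ∂ᵥΠⱼ ∂ᵤΠℓ − ∂ᵤΠℓ ∂ᵥΠⱼ) Πₖ = 0`. -/
lemma stmt10_sand (hC1 : ∀ n, ContDiff ℝ 1 (P n))
    (hidem : ∀ n z, P n z * P n z = P n z)
    (horth : ∀ n k, n ≠ k → ∀ z, P n z * P k z = 0)
    (j k ℓ : A) (z u v : (Fin d → ℝ) × (Fin d → ℝ)) :
    P k z * (fderiv ℝ (P j) z u * fderiv ℝ (P ℓ) z v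
        + fderiv ℝ (P ℓ) z v * fderiv ℝ (P j) z u
        - fderiv ℝ (P j) z v * fderiv ℝ (P ℓ) z u
        - fderiv ℝ (P ℓ) z u * fderiv ℝ (P j) z v) * P k z = 0 := by
  rcases eq_or_ne j ℓ with hjl | hjl
  · subst hjl
    have : (fderiv ℝ (P j) z u * fderiv ℝ (P j) z v
        + fderiv ℝ (P j) z v * fderiv ℝ (P j) z u
        - fderiv ℝ (P j) z v * fderiv ℝ (P j) z u
        - fderiv ℝ (P j) z u * fderiv ℝ (P j) z v) = 0 := by noncomm_ring
    rw [this, mul_zero, zero_mul]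
  rcases eq_or_ne k j with hkj | hkj
  · subst hkj
    exact stmt10_sand_kj hC1 hidem horth hjl z u v
  rcases eq_or_ne k ℓ with hkl | hkl
  · rw [hkl]
    have h := stmt10_sand_kj hC1 hidem horth hjl.symm z u v
    have e : (fderiv ℝ (P j) z u * fderiv ℝ (P ℓ) z v
        + fderiv ℝ (P ℓ) z v * fderiv ℝ (P j) z u
        - fderiv ℝ (P j) z v * fderiv ℝ (P ℓ) z u
        - fderiv ℝ (P ℓ) z u * fderiv ℝ (P j) z v)
        = -(fderiv ℝ (P ℓ) z u * fderiv ℝ (P j) z v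
        + fderiv ℝ (P j) z v * fderiv ℝ (P ℓ) z u
        - fderiv ℝ (P ℓ) z v * fderiv ℝ (P j) z u
        - fderiv ℝ (P j) z u * fderiv ℝ (P ℓ) z v) := by noncomm_ring
    rw [e, mul_neg, neg_mul, h, neg_zero]
  · apply stmt10_alg_ne (P k z) (P j z) (P ℓ z) _ _ _ _
      (fderiv ℝ (P k) z u) (fderiv ℝ (P k) z v)
    · exact horth j ℓ hjl z
    · exact horth ℓ j hjl.symm z
    · exact eq_neg_of_add_eq_zero_right (stmt10_rel_ne hC1 horth hkj z u)
    · exact eq_neg_of_add_eq_zero_left (stmt10_rel_ne hC1 horth (Ne.symm hkj) z u)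
    · exact eq_neg_of_add_eq_zero_right (stmt10_rel_ne hC1 horth hkl z u)
    · exact eq_neg_of_add_eq_zero_left (stmt10_rel_ne hC1 horth (Ne.symm hkl) z u)
    · exact eq_neg_of_add_eq_zero_right (stmt10_rel_ne hC1 horth hkj z v)
    · exact eq_neg_of_add_eq_zero_left (stmt10_rel_ne hC1 horth (Ne.symm hkj) z v)
    · exact eq_neg_of_add_eq_zero_right (stmt10_rel_ne hC1 horth hkl z v)
    · exact eq_neg_of_add_eq_zero_left (stmt10_rel_ne hC1 horth (Ne.symm hkl) z v)

end Derivs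

/-- for a pairwise orthogonal C¹ family of projections,
`Π_k ({Π_j,Π_ℓ} − {Π_ℓ,Π_j}) Π_k = 0`. -/
theorem stmt10 {H : Type*} [NormedAddCommGroup H] [InnerProductSpace ℂ H] [CompleteSpace H]
    (d : ℕ) (hd : 1 ≤ d) {A : Type*}
    (P : A → ((Fin d → ℝ) × (Fin d → ℝ)) → (H →L[ℂ] H))
    (hC1 : ∀ n, ContDiff ℝ 1 (P n))
    (hidem : ∀ n z, P n z * P n z = P n z)
    (horth : ∀ n k, n ≠ k → ∀ z, P n z * P k z = 0) :
    ∀ (j k ℓ : A) (z : (Fin d → ℝ) × (Fin d → ℝ)),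
      P k z * (pBrack d (P j) (P ℓ) z - pBrack d (P ℓ) (P j) z) * P k z = 0 := by
  intro j k ℓ z
  unfold pBrack
  rw [← Finset.sum_sub_distrib, Finset.mul_sum, Finset.sum_mul]
  apply Finset.sum_eq_zero
  intro i _
  have h := stmt10_sand hC1 hidem horth j k ℓ z (0, Pi.single i 1) (Pi.single i 1, 0)
  have e : (fderiv ℝ (P j) z (0, Pi.single i 1) * fderiv ℝ (P ℓ) z (Pi.single i 1, 0)
        - fderiv ℝ (P j) z (Pi.single i 1, 0) * fderiv ℝ (P ℓ) z (0, Pi.single i 1))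
      - (fderiv ℝ (P ℓ) z (0, Pi.single i 1) * fderiv ℝ (P j) z (Pi.single i 1, 0)
        - fderiv ℝ (P ℓ) z (Pi.single i 1, 0) * fderiv ℝ (P j) z (0, Pi.single i 1))
      = (fderiv ℝ (P j) z (0, Pi.single i 1) * fderiv ℝ (P ℓ) z (Pi.single i 1, 0)
        + fderiv ℝ (P ℓ) z (Pi.single i 1, 0) * fderiv ℝ (P j) z (0, Pi.single i 1)
        - fderiv ℝ (P j) z (Pi.single i 1, 0) * fderiv ℝ (P ℓ) z (0, Pi.single i 1)
        - fderiv ℝ (P ℓ) z (0, Pi.single i 1) * fderiv ℝ (P j) z (Pi.single i 1, 0)) := by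
    noncomm_ring
  rw [e]
  exact h
end
end

section
/- Let ζ, λ ∈ ℝ with λ = −ζ, and let f, g : ℝ → ℂ be differentiable functions belonging to L²(ℝ,ℂ) that satisfy the eigenvalue system for the operator 𝒯 = !![ζ, a; a†, −ζ] with eigenvalue λ, namely: ζ f(y) + y g(y) + g'(y) = λ f(y) and y f(y) − f'(y) − ζ g(y) = λ g(y) for all y ∈ ℝ (here a = y + d/dy, a† = y − d/dy). Then f = 0 and g(y) = g(0) e^{−y²/2} for all y ∈ ℝ; i.e. the eigenspace of 𝒯 for the eigenvalue −ζ consists exactly of multiples of (0, e^{−y²/2}). -/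
open MeasureTheory

lemma sq_hasDerivAt (y : ℝ) : HasDerivAt (fun t : ℝ => ((t:ℂ))^2) (2*(y:ℂ)) y := by
  have h : HasDerivAt (fun t : ℝ => (t:ℂ)) 1 y := Complex.ofRealCLM.hasDerivAt
  have h2 := h.mul h
  simp only [one_mul, mul_one] at h2
  have : (2*(y:ℂ)) = (y:ℂ) + y := by ring
  rw [this]
  have h3 : HasDerivAt (fun t : ℝ => (t:ℂ) * (t:ℂ)) ((y:ℂ) + y) y := h2
  simpa [sq] using h3

/-- the eigenspace of `𝒯 = !![ζ, a; a†, −ζ]` for the eigenvalue `−ζ`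
consists exactly of multiples of `(0, e^{−y²/2})`. -/
theorem stmt18 (ζ lam : ℝ) (hlam : lam = -ζ) (f g : ℝ → ℂ)
    (hf : Differentiable ℝ f) (hg : Differentiable ℝ g)
    (hfL2 : Integrable (fun y : ℝ => ‖f y‖ ^ 2))
    (hgL2 : Integrable (fun y : ℝ => ‖g y‖ ^ 2))
    (heq1 : ∀ y : ℝ, (ζ : ℂ) * f y + (y : ℂ) * g y + deriv g y = (lam : ℂ) * f y)
    (heq2 : ∀ y : ℝ, (y : ℂ) * f y - deriv f y - (ζ : ℂ) * g y = (lam : ℂ) * g y) :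
    (∀ y : ℝ, f y = 0) ∧ (∀ y : ℝ, g y = g 0 * Complex.exp (-((y : ℂ) ^ 2) / 2)) := by
  subst hlam
  have hf' : ∀ y : ℝ, deriv f y = (y:ℂ) * f y := by
    intro y
    have h := heq2 y
    push_cast at h
    linear_combination -h
  -- F y = f y * exp(-(y^2)/2) is constant
  have hexpneg : ∀ y : ℝ, HasDerivAt (fun t : ℝ => Complex.exp (-((t:ℂ)^2)/2))
      (Complex.exp (-((y:ℂ)^2)/2) * (-(y:ℂ))) y := by
    intro y
    have h := ((sq_hasDerivAt y).neg.div_const 2).cexp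
    simp only [Pi.neg_apply] at h
    convert h using 1
    ring
  have hexppos : ∀ y : ℝ, HasDerivAt (fun t : ℝ => Complex.exp (((t:ℂ)^2)/2))
      (Complex.exp (((y:ℂ)^2)/2) * ((y:ℂ))) y := by
    intro y
    have h := ((sq_hasDerivAt y).div_const 2).cexp
    convert h using 1
    ring
  have hF : ∀ y : ℝ, HasDerivAt (fun t : ℝ => f t * Complex.exp (-((t:ℂ)^2)/2)) 0 y := by
    intro y
    have h : HasDerivAt (fun t : ℝ => f t * Complex.exp (-((t:ℂ)^2)/2)) _ y :=
      ((hf y).hasDerivAt).mul (hexpneg y)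
    convert h using 1
    rw [hf' y]
    ring
  have hFconst : ∀ y : ℝ, f y * Complex.exp (-((y:ℂ)^2)/2) = f 0 := by
    intro y
    have := is_const_of_deriv_eq_zero (f := fun t : ℝ => f t * Complex.exp (-((t:ℂ)^2)/2))
      (fun t => (hF t).differentiableAt) (fun t => (hF t).deriv) y 0
    simpa using this
  have hfform : ∀ y : ℝ, f y = f 0 * Complex.exp (((y:ℂ)^2)/2) := by
    intro y
    have h := hFconst y
    field_simp at h ⊢
    rw [← h, mul_assoc, ← Complex.exp_add]
    ring_nf
    simp
  have hf0 : f 0 = 0 := by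
    by_contra h0
    have hc : Integrable (fun _ : ℝ => ‖f 0‖ ^ 2) := by
      apply hfL2.mono aestronglyMeasurable_const
      filter_upwards with y
      rw [hfform y, norm_mul]
      have harg : (((y:ℂ))^2)/2 = ((y^2/2 : ℝ) : ℂ) := by push_cast; ring
      rw [harg, ← Complex.ofReal_exp, Complex.norm_real]
      have h1 : (1:ℝ) ≤ Real.exp (y^2/2) := Real.one_le_exp (by positivity)
      simp only [Real.norm_eq_abs, abs_of_nonneg (Real.exp_pos (y^2/2)).le]
      rw [abs_of_nonneg (by positivity), abs_of_nonneg (by positivity)]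
      nlinarith [norm_nonneg (f 0), sq_nonneg (‖f 0‖ * (Real.exp (y ^ 2 / 2) - 1)), mul_nonneg (norm_nonneg (f 0)) (norm_nonneg (f 0))]
    rw [integrable_const_iff] at hc
    rcases hc with hc | hc
    · exact h0 (by simpa [pow_eq_zero_iff] using hc)
    · exact absurd hc.measure_univ_lt_top (by simp [Real.volume_univ])
  have hfzero : ∀ y : ℝ, f y = 0 := by
    intro y; rw [hfform y, hf0, zero_mul]
  refine ⟨hfzero, ?_⟩
  -- now g' = -y g
  have hg' : ∀ y : ℝ, deriv g y = -(y:ℂ) * g y := by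
    intro y
    have h := heq1 y
    rw [hfzero y] at h
    push_cast at h
    linear_combination h
  have hG : ∀ y : ℝ, HasDerivAt (fun t : ℝ => g t * Complex.exp (((t:ℂ)^2)/2)) 0 y := by
    intro y
    have h : HasDerivAt (fun t : ℝ => g t * Complex.exp (((t:ℂ)^2)/2)) _ y :=
      ((hg y).hasDerivAt).mul (hexppos y)
    convert h using 1
    rw [hg' y]
    ring
  have hGconst : ∀ y : ℝ, g y * Complex.exp (((y:ℂ)^2)/2) = g 0 := by
    intro y
    have := is_const_of_deriv_eq_zero (f := fun t : ℝ => g t * Complex.exp (((t:ℂ)^2)/2))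
      (fun t => (hG t).differentiableAt) (fun t => (hG t).deriv) y 0
    simpa using this
  intro y
  have h := hGconst y
  rw [← h, mul_assoc, ← Complex.exp_add]
  ring_nf
  simp
end

section
/- Let (μ_{n,m})_{n,m∈ℕ} be a family of finite complex Borel measures on ℝ² such that: (a) for every finitely supported c : ℕ → ℂ, the complex measure Σ_{n,m} c_n conj(c_m) μ_{n,m} is a nonnegative measure; and (b) Σ_{n∈ℕ} μ_{n,n}(ℝ²) < ∞ (each μ_{n,n} is nonnegative by (a)). Then, with γ := Σ_{n∈ℕ} μ_{n,n} (a finite nonnegative Borel measure), there exist Borel measurable functions Γ_{n,m} : ℝ² → ℂ such that: (i) μ_{n,m}(A) = ∫_A Γ_{n,m} dγ for every Borel set A and all n,m ∈ ℕ; (ii) γ-almost everywhere, 0 ≤ Γ_{n,n} ≤ 1 for all n, Γ_{m,n} = conj(Γ_{n,m}) for all n,m, and for every finitely supported c : ℕ → ℂ one has Σ_{n,m} c_n conj(c_m) Γ_{n,m} ≥ 0 (pointwise positive semidefiniteness); and (iii) Σ_{n∈ℕ} ∫_{ℝ²} Γ_{n,n} dγ = Σ_{n∈ℕ} μ_{n,n}(ℝ²)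 < ∞. -/
open MeasureTheory ComplexConjugate

noncomputable section

/-- Extending the double sum over the support of a finsupp to a superset. -/
lemma stmt19_sum_ext (c : ℕ →₀ ℂ) (φ : ℕ → ℕ → ℂ) (S : Finset ℕ) (hS : c.support ⊆ S) :
    ∑ n ∈ c.support, ∑ m ∈ c.support, c n * conj (c m) * φ n m
      = ∑ n ∈ S, ∑ m ∈ S, c n * conj (c m) * φ n m := by
  rw [Finset.sum_subset hS (fun n _ hn => by
    simp [Finsupp.notMem_support_iff.mp hn])]
  refine Finset.sum_congr rfl fun n _ => ?_
  exact Finset.sum_subset hS (fun m _ hm => by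
    simp [Finsupp.notMem_support_iff.mp hm])

/-- The rational complex points are dense. -/
lemma stmt19_dense_ratC : DenseRange (fun p : ℚ × ℚ => (p.1 : ℂ) + (p.2 : ℂ) * Complex.I) := by
  rw [Metric.denseRange_iff]
  intro z ε hε
  obtain ⟨q, hq⟩ := exists_rat_near z.re (half_pos hε)
  obtain ⟨r, hr⟩ := exists_rat_near z.im (half_pos hε)
  refine ⟨(q, r), ?_⟩
  have : dist z ((q : ℂ) + (r : ℂ) * Complex.I) ≤ |z.re - q| + |z.im - r| := by
    rw [Complex.dist_eq]
    refine le_trans (Complex.norm_le_abs_re_add_abs_im _) ?_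
    simp [Complex.sub_re, Complex.sub_im]
  calc dist z ((q : ℂ) + (r : ℂ) * Complex.I) ≤ |z.re - q| + |z.im - r| := this
    _ < ε / 2 + ε / 2 := by exact add_lt_add hq hr
    _ = ε := add_halves ε

/-- construction of the matrix-of-densities (operator-valued) measure from
a positive-semidefinite matrix of finite complex measures, via Radon–Nikodym with
respect to `γ := Σ_n μ_{n,n}`. -/
theorem stmt19 (μ : ℕ → ℕ → MeasureTheory.ComplexMeasure (ℝ × ℝ))
    (hpsd : ∀ c : ℕ →₀ ℂ, ∀ A : Set (ℝ × ℝ), MeasurableSet A →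
      0 ≤ (∑ n ∈ c.support, ∑ m ∈ c.support,
            c n * (starRingEnd ℂ) (c m) * μ n m A).re ∧
      (∑ n ∈ c.support, ∑ m ∈ c.support,
            c n * (starRingEnd ℂ) (c m) * μ n m A).im = 0)
    (hsum : Summable (fun n : ℕ => (μ n n Set.univ).re)) :
    ∃ γ : Measure (ℝ × ℝ), IsFiniteMeasure γ ∧
      (∀ A : Set (ℝ × ℝ), MeasurableSet A → (γ A).toReal = ∑' n : ℕ, (μ n n A).re) ∧
      ∃ Γ : ℕ → ℕ → (ℝ × ℝ) → ℂ,
        (∀ n m : ℕ, Measurable (Γ n m)) ∧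
        (∀ n m : ℕ, ∀ A : Set (ℝ × ℝ), MeasurableSet A →
          μ n m A = ∫ x in A, Γ n m x ∂γ) ∧
        (∀ᵐ x ∂γ,
          (∀ n : ℕ, 0 ≤ (Γ n n x).re ∧ (Γ n n x).re ≤ 1 ∧ (Γ n n x).im = 0) ∧
          (∀ n m : ℕ, Γ m n x = (starRingEnd ℂ) (Γ n m x)) ∧
          (∀ c : ℕ →₀ ℂ,
            0 ≤ (∑ n ∈ c.support, ∑ m ∈ c.support,
                  c n * (starRingEnd ℂ) (c m) * Γ n m x).re ∧
            (∑ n ∈ c.support, ∑ m ∈ c.support,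
                  c n * (starRingEnd ℂ) (c m) * Γ n m x).im = 0)) ∧
        Summable (fun n : ℕ => ∫ x, (Γ n n x).re ∂γ) ∧
        (∑' n : ℕ, ∫ x, (Γ n n x).re ∂γ) = ∑' n : ℕ, (μ n n Set.univ).re := by
  -- Step 1: diagonal measures are nonnegative
  have h1 : ∀ n, ∀ A : Set (ℝ × ℝ), MeasurableSet A →
      0 ≤ (μ n n A).re ∧ (μ n n A).im = 0 := by
    intro n A hA
    have h := hpsd (Finsupp.single n 1) A hA
    simpa [Finsupp.support_single_ne_zero n (one_ne_zero)] using h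
  -- quadratic form inequality for pairs
  have quad : ∀ n m : ℕ, n ≠ m → ∀ a b : ℂ, a ≠ 0 → b ≠ 0 → ∀ A : Set (ℝ × ℝ),
      MeasurableSet A →
      0 ≤ (a * conj a * μ n n A + a * conj b * μ n m A
          + (b * conj a * μ m n A + b * conj b * μ m m A)).re ∧
      (a * conj a * μ n n A + a * conj b * μ n m A
          + (b * conj a * μ m n A + b * conj b * μ m m A)).im = 0 := by
    intro n m hnm a b ha hb A hA
    have h := hpsd (Finsupp.single n a + Finsupp.single m b) A hA
    have hd : Disjoint (Finsupp.single n a).support (Finsupp.single m b).support := by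
      simp [Finsupp.support_single_ne_zero n ha, Finsupp.support_single_ne_zero m hb, hnm, Ne.symm hnm]
    have hsupp : (Finsupp.single n a + Finsupp.single m b).support = {n, m} := by
      rw [Finsupp.support_add_eq hd, Finsupp.support_single_ne_zero n ha,
        Finsupp.support_single_ne_zero m hb]
      rfl
    rw [hsupp, Finset.sum_pair hnm, Finset.sum_pair hnm, Finset.sum_pair hnm] at h
    have hvn : (Finsupp.single n a + Finsupp.single m b) n = a := by
      simp [Finsupp.single_apply, hnm, Ne.symm hnm, if_neg]
    have hvm : (Finsupp.single n a + Finsupp.single m b) m = b := by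
      simp [Finsupp.single_apply, hnm, Ne.symm hnm, if_neg]
    rw [hvn, hvm] at h
    exact h
  -- Step 2: hermitian symmetry at the level of measures
  have hherm : ∀ n m : ℕ, ∀ A : Set (ℝ × ℝ), MeasurableSet A →
      μ m n A = conj (μ n m A) := by
    intro n m A hA
    rcases eq_or_ne n m with rfl | hnm
    · have := h1 n A hA
      apply Complex.ext <;> simp [this.2]
    · have q1 := (quad n m hnm 1 1 one_ne_zero one_ne_zero A hA).2
      have q2 := (quad n m hnm 1 Complex.I one_ne_zero Complex.I_ne_zero A hA).2
      have hn := (h1 n A hA).2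
      have hm := (h1 m A hA).2
      simp only [map_one, one_mul, mul_one, Complex.add_im, Complex.mul_im, Complex.conj_im,
        Complex.conj_re, Complex.I_re, Complex.I_im, Complex.one_re, Complex.one_im, Complex.conj_I, Complex.mul_re, Complex.neg_im, Complex.neg_re] at q1 q2
      apply Complex.ext <;>
        simp only [Complex.conj_re, Complex.conj_im] <;> nlinarith [q1, q2, hn, hm]
  -- Step 3: the measure γ
  have hnneg : ∀ n, 0 ≤[Set.univ] (μ n n).re := by
    intro n
    refine (VectorMeasure.restrict_le_restrict_iff _ _ MeasurableSet.univ).2 ?_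
    intro j hj _
    rw [VectorMeasure.zero_apply]; exact (h1 n j hj).1
  set ν : ℕ → Measure (ℝ × ℝ) := fun n =>
    (μ n n).re.toMeasureOfZeroLE Set.univ MeasurableSet.univ (hnneg n) with hν
  set γ : Measure (ℝ × ℝ) := Measure.sum ν with hγ
  have hνapp : ∀ n, ∀ A : Set (ℝ × ℝ), MeasurableSet A →
      ν n A = ENNReal.ofReal ((μ n n A).re) := by
    intro n A hA
    rw [hν]
    rw [SignedMeasure.toMeasureOfZeroLE_apply _ _ _ hA]
    simp only [Set.univ_inter]
    rw [ENNReal.ofReal]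
    congr 1
    ext
    simp [Real.coe_toNNReal _ (h1 n A hA).1]
    rfl
  -- summability on each measurable set
  have hsummA : ∀ A : Set (ℝ × ℝ), MeasurableSet A →
      Summable (fun n => (μ n n A).re) := by
    intro A hA
    refine hsum.of_nonneg_of_le (fun n => (h1 n A hA).1) (fun n => ?_)
    have hu : μ n n Set.univ = μ n n A + μ n n Aᶜ := by
      rw [← VectorMeasure.of_union disjoint_compl_right hA hA.compl, Set.union_compl_self]
    have := (h1 n Aᶜ hA.compl).1
    rw [hu]
    simp only [Complex.add_re]
    linarith
  have hγapp : ∀ A : Set (ℝ × ℝ), MeasurableSet A →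
      γ A = ENNReal.ofReal (∑' n, (μ n n A).re) := by
    intro A hA
    rw [hγ, Measure.sum_apply _ hA]
    rw [ENNReal.ofReal_tsum_of_nonneg (fun n => (h1 n A hA).1) (hsummA A hA)]
    exact tsum_congr fun n => hνapp n A hA
  have hfin : IsFiniteMeasure γ := by
    constructor
    rw [hγapp Set.univ MeasurableSet.univ]
    exact ENNReal.ofReal_lt_top
  have hγreal : ∀ A : Set (ℝ × ℝ), MeasurableSet A →
      (γ A).toReal = ∑' n, (μ n n A).re := by
    intro A hA
    rw [hγapp A hA, ENNReal.toReal_ofReal]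
    exact tsum_nonneg fun n => (h1 n A hA).1
  -- Step 4: absolute continuity
  have hAC : ∀ n m : ℕ, ∀ A : Set (ℝ × ℝ), MeasurableSet A → γ A = 0 → μ n m A = 0 := by
    intro n m A hA hγ0
    have htsum0 : ∑' k, (μ k k A).re = 0 := by
      have := hγapp A hA
      rw [hγ0] at this
      have h0 : ENNReal.ofReal (∑' n, (μ n n A).re) = 0 := this.symm
      rw [ENNReal.ofReal_eq_zero] at h0
      exact le_antisymm h0 (tsum_nonneg fun n => (h1 n A hA).1)
    have hdiag : ∀ k, μ k k A = 0 := by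
      intro k
      have hle : (μ k k A).re ≤ 0 := htsum0 ▸ (hsummA A hA).le_tsum k (fun j _ => (h1 j A hA).1)
      have : (μ k k A).re = 0 := le_antisymm hle (h1 k A hA).1
      exact Complex.ext this (h1 k A hA).2
    rcases eq_or_ne n m with rfl | hnm
    · exact hdiag n
    · set z := μ n m A with hz
      by_cases hz0 : z = 0
      · exact hz0
      · have q := (quad n m hnm 1 (-z) one_ne_zero (neg_ne_zero.mpr hz0) A hA).1
        rw [hdiag n, hdiag m, hherm n m A hA, ← hz] at q
        have hrw : (1:ℂ) * conj 1 * 0 + 1 * conj (-z) * z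
            + (-z * conj 1 * conj z + -z * conj (-z) * 0) = -2 * (z * conj z) := by
          simp only [map_neg, map_one]
          ring
        rw [hrw, Complex.mul_conj] at q
        have hpos := Complex.normSq_pos.mpr hz0
        simp only [Complex.mul_re, Complex.ofReal_re, Complex.ofReal_im] at q
        norm_num at q
        nlinarith
  refine ⟨γ, hfin, hγreal, ?_⟩
  haveI := hfin
  -- absolute continuity of real and imaginary parts
  have hACre : ∀ n m : ℕ, (μ n m).re ≪ᵥ γ.toENNRealVectorMeasure := by
    intro n m
    refine VectorMeasure.AbsolutelyContinuous.mk fun s hs hs0 => ?_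
    rw [Measure.toENNRealVectorMeasure_apply_measurable hs] at hs0
    simp [ComplexMeasure.re_apply, hAC n m s hs hs0]
    exact (congrArg Complex.re (hAC n m s hs hs0)).trans Complex.zero_re
  have hACim : ∀ n m : ℕ, (μ n m).im ≪ᵥ γ.toENNRealVectorMeasure := by
    intro n m
    refine VectorMeasure.AbsolutelyContinuous.mk fun s hs hs0 => ?_
    rw [Measure.toENNRealVectorMeasure_apply_measurable hs] at hs0
    simp [ComplexMeasure.im_apply, hAC n m s hs hs0]
    exact (congrArg Complex.im (hAC n m s hs hs0)).trans Complex.zero_im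
  set Γre : ℕ → ℕ → (ℝ × ℝ) → ℝ := fun n m => (μ n m).re.rnDeriv γ with hΓre
  set Γim : ℕ → ℕ → (ℝ × ℝ) → ℝ := fun n m => (μ n m).im.rnDeriv γ with hΓim
  set Γ : ℕ → ℕ → (ℝ × ℝ) → ℂ := fun n m x => (Γre n m x : ℂ) + (Γim n m x : ℂ) * Complex.I
    with hΓdef
  have hΓreval : ∀ n m x, (Γ n m x).re = Γre n m x := by intro n m x; simp [hΓdef]
  have hΓimval : ∀ n m x, (Γ n m x).im = Γim n m x := by intro n m x; simp [hΓdef]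
  have hmeas : ∀ n m : ℕ, Measurable (Γ n m) := by
    intro n m
    exact (Complex.measurable_ofReal.comp (SignedMeasure.measurable_rnDeriv _ _)).add
      ((Complex.measurable_ofReal.comp (SignedMeasure.measurable_rnDeriv _ _)).mul_const _)
  have hintre : ∀ n m : ℕ, Integrable (Γre n m) γ := fun n m =>
    SignedMeasure.integrable_rnDeriv _ _
  have hintim : ∀ n m : ℕ, Integrable (Γim n m) γ := fun n m =>
    SignedMeasure.integrable_rnDeriv _ _
  have hΓint : ∀ n m : ℕ, Integrable (Γ n m) γ := by
    intro n m
    exact ((hintre n m).ofReal).add (((hintim n m).ofReal).mul_const _)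
  have hre_int : ∀ n m : ℕ, ∀ A : Set (ℝ × ℝ), MeasurableSet A →
      ∫ x in A, Γre n m x ∂γ = (μ n m A).re := by
    intro n m A hA
    have h := withDensityᵥ_apply (SignedMeasure.integrable_rnDeriv (μ n m).re γ) hA
    rw [SignedMeasure.withDensityᵥ_rnDeriv_eq _ _ (hACre n m)] at h
    rw [← h]
    rfl
  have him_int : ∀ n m : ℕ, ∀ A : Set (ℝ × ℝ), MeasurableSet A →
      ∫ x in A, Γim n m x ∂γ = (μ n m A).im := by
    intro n m A hA
    have h := withDensityᵥ_apply (SignedMeasure.integrable_rnDeriv (μ n m).im γ) hA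
    rw [SignedMeasure.withDensityᵥ_rnDeriv_eq _ _ (hACim n m)] at h
    rw [← h]
    rfl
  have hint : ∀ n m : ℕ, ∀ A : Set (ℝ × ℝ), MeasurableSet A →
      μ n m A = ∫ x in A, Γ n m x ∂γ := by
    intro n m A hA
    have hre := integral_re ((hΓint n m).restrict (s := A))
    have him := integral_im ((hΓint n m).restrict (s := A))
    apply Complex.ext
    · rw [← hre_int n m A hA, ← RCLike.re_eq_complex_re, ← hre]
      refine setIntegral_congr_fun hA fun x _ => ?_
      rw [RCLike.re_eq_complex_re, hΓreval]
    · rw [← him_int n m A hA, ← RCLike.im_eq_complex_im, ← him]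
      refine setIntegral_congr_fun hA fun x _ => ?_
      rw [RCLike.im_eq_complex_im, hΓimval]
  -- key a.e. lemma
  have key : ∀ g : (ℝ × ℝ) → ℂ, Integrable g γ →
      (∀ A : Set (ℝ × ℝ), MeasurableSet A →
        0 ≤ (∫ x in A, g x ∂γ).re ∧ (∫ x in A, g x ∂γ).im = 0) →
      ∀ᵐ x ∂γ, 0 ≤ (g x).re ∧ (g x).im = 0 := by
    intro g hg hA
    have hgre : Integrable (fun x => (g x).re) γ := by
      have := hg.re
      simpa [RCLike.re_eq_complex_re] using this
    have hgim : Integrable (fun x => (g x).im) γ := by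
      have := hg.im
      simpa [RCLike.im_eq_complex_im] using this
    have hre : 0 ≤ᵐ[γ] fun x => (g x).re := by
      refine ae_nonneg_of_forall_setIntegral_nonneg hgre fun s hs _ => ?_
      have h := integral_re (hg.restrict (s := s))
      simp only [RCLike.re_eq_complex_re] at h
      rw [h]
      exact (hA s hs).1
    have him1 : 0 ≤ᵐ[γ] fun x => (g x).im := by
      refine ae_nonneg_of_forall_setIntegral_nonneg hgim fun s hs _ => ?_
      have h := integral_im (hg.restrict (s := s))
      simp only [RCLike.im_eq_complex_im] at h
      rw [h, (hA s hs).2]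
    have him2 : 0 ≤ᵐ[γ] fun x => -(g x).im := by
      refine ae_nonneg_of_forall_setIntegral_nonneg hgim.neg fun s hs _ => ?_
      have h := integral_im (hg.restrict (s := s))
      simp only [RCLike.im_eq_complex_im] at h
      rw [integral_neg, h, (hA s hs).2]
      simp
    filter_upwards [hre, him1, him2] with x a b cc
    refine ⟨a, ?_⟩
    simp only [Pi.zero_apply] at b cc
    linarith
  -- pointwise psd a.e. for each fixed coefficient vector
  have hpsd_ae : ∀ c : ℕ →₀ ℂ, ∀ᵐ x ∂γ,
      0 ≤ (∑ n ∈ c.support, ∑ m ∈ c.support, c n * conj (c m) * Γ n m x).re ∧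
      (∑ n ∈ c.support, ∑ m ∈ c.support, c n * conj (c m) * Γ n m x).im = 0 := by
    intro c
    have hgint : Integrable
        (fun x => ∑ n ∈ c.support, ∑ m ∈ c.support, c n * conj (c m) * Γ n m x) γ := by
      refine integrable_finset_sum _ fun n _ => integrable_finset_sum _ fun m _ => ?_
      exact (hΓint n m).const_mul _
    refine key _ hgint fun A hA => ?_
    have heq : ∫ x in A, (∑ n ∈ c.support, ∑ m ∈ c.support, c n * conj (c m) * Γ n m x) ∂γ
        = ∑ n ∈ c.support, ∑ m ∈ c.support, c n * conj (c m) * μ n m A := by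
      rw [integral_finset_sum _ (fun n _ =>
        (integrable_finset_sum _ fun m _ => ((hΓint n m).const_mul _)).restrict)]
      refine Finset.sum_congr rfl fun n _ => ?_
      rw [integral_finset_sum _ (fun m _ => ((hΓint n m).const_mul _).restrict)]
      refine Finset.sum_congr rfl fun m _ => ?_
      rw [integral_const_mul, ← hint n m A hA]
    rw [heq]
    exact hpsd c A hA
  -- hermitian a.e.
  have hherm_ae : ∀ n m : ℕ, ∀ᵐ x ∂γ, Γ m n x = conj (Γ n m x) := by
    intro n m
    have hconj_int : Integrable (fun x => conj (Γ n m x)) γ := by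
      have heq : (fun x => conj (Γ n m x))
          = fun x => ((Γre n m x : ℝ) : ℂ) + ((-(Γim n m x) : ℝ) : ℂ) * Complex.I := by
        funext x
        simp only [hΓdef, map_add, map_mul, Complex.conj_ofReal, Complex.conj_I,
          Complex.ofReal_neg]
        ring
      rw [heq]
      exact ((hintre n m).ofReal).add (((hintim n m).neg.ofReal).mul_const _)
    refine (hΓint m n).ae_eq_of_withDensityᵥ_eq hconj_int ?_
    ext A hA
    rw [withDensityᵥ_apply (hΓint m n) hA, withDensityᵥ_apply hconj_int hA, integral_conj,
      ← hint m n A hA, ← hint n m A hA]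
    exact hherm n m A hA
  -- diagonal bounds a.e.
  have hd0 : ∀ n : ℕ, ∀ᵐ x ∂γ, 0 ≤ Γre n n x := by
    intro n
    refine ae_nonneg_of_forall_setIntegral_nonneg (hintre n n) fun s hs _ => ?_
    rw [hre_int n n s hs]
    exact (h1 n s hs).1
  have hd1 : ∀ n : ℕ, ∀ᵐ x ∂γ, Γre n n x ≤ 1 := by
    intro n
    have h : 0 ≤ᵐ[γ] fun x => 1 - Γre n n x := by
      refine ae_nonneg_of_forall_setIntegral_nonneg
        ((integrable_const (1:ℝ)).sub (hintre n n)) fun s hs _ => ?_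
      rw [integral_sub (integrable_const _).restrict (hintre n n).restrict,
        hre_int n n s hs, setIntegral_const]
      have hle := (hsummA s hs).le_tsum n (fun j _ => (h1 j s hs).1)
      rw [← hγreal s hs, ← measureReal_def] at hle
      simp only [smul_eq_mul, mul_one]
      linarith
    filter_upwards [h] with x hx
    simp only [Pi.zero_apply] at hx
    linarith
  -- provide the answer
  refine ⟨Γ, hmeas, hint, ?_, ?_, ?_⟩
  · -- the almost-everywhere properties
    classical
    set e : ℚ × ℚ → ℂ := fun p => (p.1 : ℂ) + (p.2 : ℂ) * Complex.I with he
    have he0 : e 0 = 0 := by simp [he]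
    set cD : (ℕ →₀ ℚ × ℚ) → (ℕ →₀ ℂ) := fun d => Finsupp.mapRange e he0 d with hcD
    have H0 : ∀ᵐ x ∂γ, ∀ n : ℕ, 0 ≤ Γre n n x := ae_all_iff.2 hd0
    have H1 : ∀ᵐ x ∂γ, ∀ n : ℕ, Γre n n x ≤ 1 := ae_all_iff.2 hd1
    have H2 : ∀ᵐ x ∂γ, ∀ n m : ℕ, Γ m n x = conj (Γ n m x) :=
      ae_all_iff.2 fun n => ae_all_iff.2 fun m => hherm_ae n m
    have H4 : ∀ᵐ x ∂γ, ∀ d : ℕ →₀ ℚ × ℚ,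
        0 ≤ (∑ n ∈ (cD d).support, ∑ m ∈ (cD d).support,
              (cD d) n * conj ((cD d) m) * Γ n m x).re ∧
        (∑ n ∈ (cD d).support, ∑ m ∈ (cD d).support,
              (cD d) n * conj ((cD d) m) * Γ n m x).im = 0 :=
      ae_all_iff.2 fun d => hpsd_ae (cD d)
    filter_upwards [H0, H1, H2, H4] with x hx0 hx1 hx2 hx4
    refine ⟨fun n => ⟨?_, ?_, ?_⟩, hx2, ?_⟩
    · rw [hΓreval]; exact hx0 n
    · rw [hΓreval]; exact hx1 n
    · have := hx2 n n
      have him := congrArg Complex.im this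
      simp only [Complex.conj_im] at him
      linarith
    · intro c
      set S := c.support with hS
      set f : (ℕ → ℂ) → ℂ := fun v => ∑ n ∈ S, ∑ m ∈ S, v n * conj (v m) * Γ n m x with hf
      have hfc : Continuous f := by
        refine continuous_finset_sum _ fun n _ => continuous_finset_sum _ fun m _ => ?_
        exact (((continuous_apply n).mul
          ((Complex.continuous_conj).comp (continuous_apply m)))).mul continuous_const
      have hclosed : IsClosed {v : ℕ → ℂ | 0 ≤ (f v).re ∧ (f v).im = 0} := by
        refine IsClosed.inter ?_ ?_
        · exact isClosed_le continuous_const (Complex.continuous_re.comp hfc)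
        · exact isClosed_eq (Complex.continuous_im.comp hfc) continuous_const
      have hDsub : {v : ℕ → ℂ | ∀ k, ∃ p : ℚ × ℚ, v k = e p}
          ⊆ {v : ℕ → ℂ | 0 ≤ (f v).re ∧ (f v).im = 0} := by
        intro v hv
        set d : ℕ →₀ ℚ × ℚ := Finsupp.onFinset S
          (fun k => if k ∈ S then (hv k).choose else 0)
          (fun k hk => by by_contra h; simp [h] at hk) with hd
        have hval : ∀ k ∈ S, (cD d) k = v k := by
          intro k hk
          rw [hcD]
          simp only [Finsupp.mapRange_apply, hd, Finsupp.onFinset_apply, if_pos hk]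
          exact ((hv k).choose_spec).symm
        have hsub : (cD d).support ⊆ S :=
          subset_trans Finsupp.support_mapRange Finsupp.support_onFinset_subset
        have h := hx4 d
        rw [stmt19_sum_ext (cD d) (fun n m => Γ n m x) S hsub] at h
        have hfv : ∑ n ∈ S, ∑ m ∈ S, (cD d) n * conj ((cD d) m) * Γ n m x = f v := by
          refine Finset.sum_congr rfl fun n hn => Finset.sum_congr rfl fun m hm => ?_
          rw [hval n hn, hval m hm]
        rwa [hfv] at h
      have hdense : Dense {v : ℕ → ℂ | ∀ k, ∃ p : ℚ × ℚ, v k = e p} := by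
        have hEq : {v : ℕ → ℂ | ∀ k, ∃ p : ℚ × ℚ, v k = e p}
            = Set.pi Set.univ (fun _ : ℕ => Set.range e) := by
          ext v
          simp [Set.mem_pi, Set.mem_range, eq_comm]
        rw [hEq, dense_iff_closure_eq, closure_pi_set]
        have := stmt19_dense_ratC.closure_range
        rw [he]
        simp [this]
      have hmem : (⇑c : ℕ → ℂ) ∈ {v : ℕ → ℂ | 0 ≤ (f v).re ∧ (f v).im = 0} := by
        have h1' : (⇑c : ℕ → ℂ) ∈ closure {v : ℕ → ℂ | ∀ k, ∃ p : ℚ × ℚ, v k = e p} := by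
          rw [hdense.closure_eq]; trivial
        exact hclosed.closure_eq ▸ closure_mono hDsub h1'
      simpa [hf] using hmem
  · have htot : ∀ n, ∫ x, (Γ n n x).re ∂γ = (μ n n Set.univ).re := by
      intro n
      have h := hre_int n n Set.univ MeasurableSet.univ
      rw [Measure.restrict_univ] at h
      rw [← h]
      exact integral_congr_ae (Filter.EventuallyEq.of_eq (funext fun x => hΓreval n n x))
    exact hsum.congr fun n => (htot n).symm
  · have htot : ∀ n, ∫ x, (Γ n n x).re ∂γ = (μ n n Set.univ).re := by
      intro n
      have h := hre_int n n Set.univ MeasurableSet.univ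
      rw [Measure.restrict_univ] at h
      rw [← h]
      exact integral_congr_ae (Filter.EventuallyEq.of_eq (funext fun x => hΓreval n n x))
    exact tsum_congr htot
end
end
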